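/- Let Y be the 6×6 {0,1}-matrix with rows (1,1,1,1,0,0), (1,1,1,0,1,0), (1,1,1,0,0,1), (0,1,1,0,0,0), (1,0,1,0,0,0), (1,1,0,0,0,0). Then for every r ≥ 1, every r×6 matrix X whose rows are all chosen among the rows of Y, and every probability row vector R of length r, there exists a Dirac-weight vector W of length 6 such that R·X·W > 1/2. -/

import Mathlib

/-- A Dirac-weight vector: exactly one entry `1`, exactly one entry `-1`,
all other entries `0`. -/
def DiracWeight {m : ℕ} (W : Fin m → ℝ) : Prop :=
  ∃ i j : Fin m, i ≠ j ∧ W i = 1 ∧ W j = -1 ∧ ∀ k, k ≠ i → k ≠ j → W k = 0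

/-- The 6×6 matrix from the paper. -/
def Ymat : Matrix (Fin 6) (Fin 6) ℝ :=
  !![1, 1, 1, 1, 0, 0;
     1, 1, 1, 0, 1, 0;
     1, 1, 1, 0, 0, 1;
     0, 1, 1, 0, 0, 0;
     1, 0, 1, 0, 0, 0;
     1, 1, 0, 0, 0, 0]

lemma cons5 (a b c d e f : ℝ) : (![a,b,c,d,e,f] : Fin 6 → ℝ) 5 = f := rfl
lemma cons2 (a b c d e f : ℝ) : (![a,b,c,d,e,f] : Fin 6 → ℝ) 2 = c := rfl
lemma cons3 (a b c d e f : ℝ) : (![a,b,c,d,e,f] : Fin 6 → ℝ) 3 = d := rfl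
lemma cons4 (a b c d e f : ℝ) : (![a,b,c,d,e,f] : Fin 6 → ℝ) 4 = e := rfl

lemma ymat_key : ∀ m : Fin 6,
    (Ymat m 0 - Ymat m 3) + (Ymat m 1 - Ymat m 4) + (Ymat m 2 - Ymat m 5) = 2 := by
  intro m; fin_cases m <;> norm_num [Ymat, cons2, cons3, cons4, cons5]

theorem stmt1 (r : ℕ) (hr : 1 ≤ r) (X : Matrix (Fin r) (Fin 6) ℝ)
    (hrows : ∀ i : Fin r, ∃ k : Fin 6, ∀ j : Fin 6, X i j = Ymat k j)
    (R : Fin r → ℝ) (hR0 : ∀ i, 0 ≤ R i) (hR1 : ∑ i, R i = 1) :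
    ∃ W : Fin 6 → ℝ, DiracWeight W ∧
      1 / 2 < ∑ j, (∑ i, R i * X i j) * W j := by
  choose k hk using hrows
  set v : Fin 6 → ℝ := fun j => ∑ i, R i * X i j with hv
  have key : ∀ i : Fin r,
      (R i * X i 0 - R i * X i 3) + (R i * X i 1 - R i * X i 4)
        + (R i * X i 2 - R i * X i 5) = R i * 2 := by
    intro i
    rw [hk i 0, hk i 1, hk i 2, hk i 3, hk i 4, hk i 5]
    linear_combination (R i) * ymat_key (k i)
  have hsum : (v 0 - v 3) + (v 1 - v 4) + (v 2 - v 5) = 2 := by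
    have : ∑ i, ((R i * X i 0 - R i * X i 3) + (R i * X i 1 - R i * X i 4)
        + (R i * X i 2 - R i * X i 5)) = ∑ i, R i * 2 :=
      Finset.sum_congr rfl (fun i _ => key i)
    simp only [Finset.sum_add_distrib, Finset.sum_sub_distrib, ← Finset.sum_mul, hR1] at this
    simpa [hv] using this
  have htri : 1/2 < v 0 - v 3 ∨ 1/2 < v 1 - v 4 ∨ 1/2 < v 2 - v 5 := by
    by_contra h
    push_neg at h
    obtain ⟨h1, h2, h3⟩ := h
    linarith
  rcases htri with h | h | h
  · refine ⟨![1,0,0,-1,0,0], ⟨0, 3, by decide, rfl, rfl, ?_⟩, ?_⟩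
    · intro kk h1 h2; fin_cases kk <;> simp_all [cons5]
    · show 1/2 < ∑ j, v j * ![1,0,0,-1,0,0] j
      rw [Fin.sum_univ_six]
      norm_num [cons2, cons3, cons4, cons5]
      linarith
  · refine ⟨![0,1,0,0,-1,0], ⟨1, 4, by decide, rfl, rfl, ?_⟩, ?_⟩
    · intro kk h1 h2; fin_cases kk <;> simp_all [cons5]
    · show 1/2 < ∑ j, v j * ![0,1,0,0,-1,0] j
      rw [Fin.sum_univ_six]
      norm_num [cons2, cons3, cons4, cons5]
      linarith
  · refine ⟨![0,0,1,0,0,-1], ⟨2, 5, by decide, rfl, rfl, ?_⟩, ?_⟩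
    · intro kk h1 h2; fin_cases kk <;> simp_all [cons5]
    · show 1/2 < ∑ j, v j * ![0,0,1,0,0,-1] j
      rw [Fin.sum_univ_six]
      norm_num [cons2, cons3, cons4, cons5]
      linarith
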